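/- Let u = e^{iφ/3} with φ = 2π/p, τ ∈ ℂ, set α = 2 − u³ − conj(u)³ and β = (conj(u)² − u)τ, and let H = [[α, β, conj(β)], [conj(β), α, β], [β, conj(β), α]]. Then the matrix R₁ = [[u², τ, −u·conj(τ)], [0, conj(u), 0], [0, 0, conj(u)]] satisfies conj(R₁)ᵗ H R₁ = H, i.e. R₁ preserves the Hermitian form H. -/

import Mathlib

open Matrix Complex

private lemma stmt9_aux (u v τ t : ℂ) (h : u * v = 1) :
    !![v ^ 2, 0, 0; t, u, 0; -v * τ, 0, u] *
      !![2 - u ^ 3 - v ^ 3, (v ^ 2 - u) * τ, (u ^ 2 - v) * t;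
         (u ^ 2 - v) * t, 2 - u ^ 3 - v ^ 3, (v ^ 2 - u) * τ;
         (v ^ 2 - u) * τ, (u ^ 2 - v) * t, 2 - u ^ 3 - v ^ 3] *
      !![u ^ 2, τ, -u * t; 0, v, 0; 0, 0, v] =
    !![2 - u ^ 3 - v ^ 3, (v ^ 2 - u) * τ, (u ^ 2 - v) * t;
       (u ^ 2 - v) * t, 2 - u ^ 3 - v ^ 3, (v ^ 2 - u) * τ;
       (v ^ 2 - u) * τ, (u ^ 2 - v) * t, 2 - u ^ 3 - v ^ 3] := by
  ext i j
  fin_cases i <;> fin_cases j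
  · simp [Matrix.mul_apply, Fin.sum_univ_three, Matrix.vecHead, Matrix.vecTail]
    linear_combination (2 - v^3 + 2*u*v - u*v^4 - u^3 - u^4*v) * h
  · simp [Matrix.mul_apply, Fin.sum_univ_three, Matrix.vecHead, Matrix.vecTail]
    linear_combination (-v^2*τ - u*τ - u^2*v*τ) * h
  · simp [Matrix.mul_apply, Fin.sum_univ_three, Matrix.vecHead, Matrix.vecTail]
    linear_combination (-v*t + v^4*t + u*v^2*t + u^2*t + u^3*v*t) * h
  · simp [Matrix.mul_apply, Fin.sum_univ_three, Matrix.vecHead, Matrix.vecTail]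
    linear_combination (-v*t - u*v^2*t - u^2*t) * h
  · simp [Matrix.mul_apply, Fin.sum_univ_three, Matrix.vecHead, Matrix.vecTail]
    linear_combination (2 - 2*τ*t - v^3 - u^3) * h
  · simp [Matrix.mul_apply, Fin.sum_univ_three, Matrix.vecHead, Matrix.vecTail]
    linear_combination (v^2*t^2 + v^2*τ + 2*u*t^2 - u*τ) * h
  · simp [Matrix.mul_apply, Fin.sum_univ_three, Matrix.vecHead, Matrix.vecTail]
    linear_combination (v^2*τ - u*τ + u*v^3*τ + u^2*v*τ + u^4*τ) * h
  · simp [Matrix.mul_apply, Fin.sum_univ_three, Matrix.vecHead, Matrix.vecTail]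
    linear_combination (-v*t + 2*v*τ^2 + u^2*t + u^2*τ^2) * h
  · simp [Matrix.mul_apply, Fin.sum_univ_three, Matrix.vecHead, Matrix.vecTail]
    linear_combination (2 - v^3 - v^3*τ*t - 2*u*v*τ*t - u^3 - u^3*τ*t) * h

theorem stmt9 (p : ℕ) (hp : 2 ≤ p) (φ : ℝ) (hφ : φ = 2 * Real.pi / p)
    (u : ℂ) (hu : u = Complex.exp (Complex.I * φ / 3))
    (τ α β : ℂ)
    (hα : α = 2 - u ^ 3 - (starRingEnd ℂ u) ^ 3)
    (hβ : β = ((starRingEnd ℂ u) ^ 2 - u) * τ)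
    (H R₁ : Matrix (Fin 3) (Fin 3) ℂ)
    (hH : H = !![α, β, starRingEnd ℂ β;
                 starRingEnd ℂ β, α, β;
                 β, starRingEnd ℂ β, α])
    (hR₁ : R₁ = !![u ^ 2, τ, -u * starRingEnd ℂ τ;
                   0, starRingEnd ℂ u, 0;
                   0, 0, starRingEnd ℂ u]) :
    R₁.conjTranspose * H * R₁ = H := by
  have habs : ‖u‖ = 1 := by
    rw [hu, Complex.norm_exp]
    have : (Complex.I * ↑φ / 3).re = 0 := by simp
    rw [this, Real.exp_zero]
  set v := starRingEnd ℂ u with hv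
  set t := starRingEnd ℂ τ with ht
  have huv : u * v = 1 := by
    rw [hv, Complex.mul_conj, Complex.normSq_eq_norm_sq, habs]; norm_num
  have hvu : starRingEnd ℂ v = u := by rw [hv, Complex.conj_conj]
  have htτ : starRingEnd ℂ t = τ := by rw [ht, Complex.conj_conj]
  have hcβ : starRingEnd ℂ β = (u ^ 2 - v) * t := by
    rw [hβ, _root_.map_mul, map_sub, map_pow, hvu, ← ht, ← hv]
  have hH' : H = !![2 - u ^ 3 - v ^ 3, (v ^ 2 - u) * τ, (u ^ 2 - v) * t;
                    (u ^ 2 - v) * t, 2 - u ^ 3 - v ^ 3, (v ^ 2 - u) * τ;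
                    (v ^ 2 - u) * τ, (u ^ 2 - v) * t, 2 - u ^ 3 - v ^ 3] := by
    rw [hH, hcβ, hα, hβ]
  have hRc : R₁.conjTranspose = !![v ^ 2, 0, 0; t, u, 0; -v * τ, 0, u] := by
    rw [hR₁]
    ext i j
    fin_cases i <;> fin_cases j <;>
      simp [Matrix.conjTranspose_apply, Matrix.vecHead, Matrix.vecTail,
        hvu, htτ, ← hv, ← ht]
  have hR₁' : R₁ = !![u ^ 2, τ, -u * t; 0, v, 0; 0, 0, v] := hR₁
  rw [hH', hRc, hR₁']
  exact stmt9_aux u v τ t huv
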